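/- For an entrywise nonnegative square matrix A, the spectral radius ρ(A) is strictly less than 1 if and only if the matrix I − A is invertible and (I − A)^{-1} is entrywise nonnegative. -/

import Mathlib

open Filter Topology Matrix
open scoped ENNReal NNReal

attribute [local instance] Matrix.linftyOpNormedRing Matrix.linftyOpNormedAlgebra
  Matrix.linftyOpNormedAddCommGroup

namespace SchurAux

variable {n : ℕ}

noncomputable local instance : CompleteSpace (Matrix (Fin n) (Fin n) ℂ) :=
  by infer_instance

lemma entry_nnnorm_le (M : Matrix (Fin n) (Fin n) ℂ) (i j : Fin n) : ‖M i j‖₊ ≤ ‖M‖₊ := by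
  rw [Matrix.linfty_opNNNorm_def]
  exact le_trans
    (Finset.single_le_sum (f := fun k => ‖M i k‖₊) (fun _ _ => zero_le) (Finset.mem_univ j))
    (Finset.le_sup (f := fun i => ∑ j, ‖M i j‖₊) (Finset.mem_univ i))

lemma entry_norm_le (M : Matrix (Fin n) (Fin n) ℂ) (i j : Fin n) : ‖M i j‖ ≤ ‖M‖ :=
  entry_nnnorm_le M i j

lemma tendsto_pow_zero_of_spectralRadius_lt_one (M : Matrix (Fin n) (Fin n) ℂ)
    (h : spectralRadius ℂ M < 1) : Tendsto (fun k => ‖M ^ k‖) atTop (𝓝 0) := by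
  obtain ⟨r, hρr, hr1⟩ := ENNReal.lt_iff_exists_nnreal_btwn.mp h
  rw [ENNReal.coe_lt_one_iff] at hr1
  have hev : ∀ᶠ k : ℕ in atTop, (‖M ^ k‖₊ : ℝ≥0∞) ^ (1 / (k : ℝ)) < (r : ℝ≥0∞) :=
    (spectrum.pow_nnnorm_pow_one_div_tendsto_nhds_spectralRadius M).eventually_lt_const hρr
  have hbound : ∀ᶠ k : ℕ in atTop, ‖M ^ k‖ ≤ (r : ℝ) ^ k := by
    filter_upwards [hev, eventually_ge_atTop 1] with k hk hk1
    have hkne : (k : ℝ) ≠ 0 := Nat.cast_ne_zero.mpr (by omega)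
    have := ENNReal.rpow_le_rpow hk.le (by positivity : (0:ℝ) ≤ (k : ℝ))
    rw [← ENNReal.rpow_mul, one_div,
      inv_mul_cancel₀ hkne, ENNReal.rpow_one, ENNReal.rpow_natCast,
      ← ENNReal.coe_pow, ENNReal.coe_le_coe] at this
    calc ‖M ^ k‖ = ((‖M ^ k‖₊ : ℝ≥0) : ℝ) := rfl
      _ ≤ ((r ^ k : ℝ≥0) : ℝ) := by exact_mod_cast this
      _ = (r : ℝ) ^ k := by push_cast; ring
  have hgeom : Tendsto (fun k : ℕ => (r : ℝ) ^ k) atTop (𝓝 0) :=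
    tendsto_pow_atTop_nhds_zero_of_lt_one r.coe_nonneg hr1
  exact squeeze_zero' (Eventually.of_forall fun k => norm_nonneg _) hbound hgeom

end SchurAux

open SchurAux

/-- Entries of powers of an entrywise nonnegative matrix are nonnegative. -/
lemma schur_pow_entry_nonneg {n : ℕ} {A : Matrix (Fin n) (Fin n) ℝ}
    (hA : ∀ i j, 0 ≤ A i j) (k : ℕ) : ∀ i j, 0 ≤ (A ^ k) i j := by
  induction k with
  | zero => intro i j; by_cases hij : i = j <;> simp [Matrix.one_apply, hij]
  | succ k ih =>
    intro i j
    rw [pow_succ, Matrix.mul_apply]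
    exact Finset.sum_nonneg fun l _ => mul_nonneg (ih i l) (hA l j)

/-- The fundamental identity `B = (∑_{m<k} A^m) + A^k B` for `B = (1-A)⁻¹`. -/
lemma schur_geom_identity {n : ℕ} {A : Matrix (Fin n) (Fin n) ℝ}
    (hU : IsUnit (1 - A)) (k : ℕ) :
    (1 - A)⁻¹ = (∑ m ∈ Finset.range k, A ^ m) + A ^ k * (1 - A)⁻¹ := by
  set B := (1 - A)⁻¹ with hBdef
  have h1 : (1 - A) * B = 1 :=
    Matrix.mul_nonsing_inv _ ((Matrix.isUnit_iff_isUnit_det _).mp hU)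
  have h2 : B = 1 + A * B := by
    rw [sub_mul, one_mul] at h1
    calc B = B - A * B + A * B := by abel
      _ = 1 + A * B := by rw [h1]
  induction k with
  | zero => simp
  | succ k ih =>
    rw [Finset.sum_range_succ]
    calc B = (∑ m ∈ Finset.range k, A ^ m) + A ^ k * B := ih
      _ = (∑ m ∈ Finset.range k, A ^ m) + A ^ k * (1 + A * B) := by rw [← h2]
      _ = (∑ m ∈ Finset.range k, A ^ m) + A ^ k + A ^ (k + 1) * B := by
          rw [mul_add, mul_one, pow_succ, mul_assoc]; abel
      _ = _ := by rw [add_assoc]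

theorem nonneg_matrix_schur_iff_inverse_nonneg
    (n : ℕ) (A : Matrix (Fin n) (Fin n) ℝ) (hA : ∀ i j, 0 ≤ A i j) :
    (∀ z ∈ spectrum ℂ (A.map Complex.ofReal), ‖z‖ < 1) ↔
      (IsUnit (1 - A) ∧ ∀ i j, 0 ≤ (1 - A)⁻¹ i j) := by
  set AC := A.map Complex.ofReal with hACdef
  have hmapA : AC = Complex.ofRealHom.mapMatrix A := rfl
  have hmap : ∀ k : ℕ, (A ^ k).map Complex.ofReal = AC ^ k := by
    intro k
    rw [hmapA, ← map_pow]
    rfl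
  constructor
  · -- forward direction
    intro h
    rcases Nat.eq_zero_or_pos n with rfl | hn
    · exact ⟨isUnit_of_subsingleton _, fun i => i.elim0⟩
    haveI : Nonempty (Fin n) := ⟨⟨0, hn⟩⟩
    -- `1 - A` is a unit
    have h1 : (1 : ℂ) ∉ spectrum ℂ AC := fun hc => absurd (h 1 hc) (by norm_num)
    rw [spectrum.notMem_iff] at h1
    rw [_root_.map_one] at h1
    have hdet : (1 - AC).det = (((1 - A).det : ℝ) : ℂ) := by
      have : (1 : Matrix (Fin n) (Fin n) ℂ) - AC = Complex.ofRealHom.mapMatrix (1 - A) := by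
        rw [map_sub, _root_.map_one, hmapA]
      rw [this, ← RingHom.map_det]
      rfl
    have hdetU : IsUnit (1 - AC).det := (Matrix.isUnit_iff_isUnit_det _).mp h1
    have hdetA : (1 - A).det ≠ 0 := by
      intro hc
      rw [hdet, hc] at hdetU
      simp at hdetU
    have hU : IsUnit (1 - A) :=
      (Matrix.isUnit_iff_isUnit_det _).mpr (isUnit_iff_ne_zero.mpr hdetA)
    refine ⟨hU, ?_⟩
    -- spectral radius < 1
    have hρ : spectralRadius ℂ AC < 1 := by
      have := spectrum.spectralRadius_lt_of_forall_lt (a := AC) (r := 1)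
        (fun z hz => by simpa [← Real.lt_toNNReal_iff_coe_lt] using
          (show ‖z‖₊ < 1 by exact_mod_cast h z hz))
      simpa using this
    have hnorm := tendsto_pow_zero_of_spectralRadius_lt_one AC hρ
    -- entrywise convergence of powers to 0
    have hent : ∀ i j, Tendsto (fun k => (A ^ k) i j) atTop (𝓝 0) := by
      intro i j
      refine squeeze_zero_norm (fun k => ?_) hnorm
      have : ((A ^ k) i j : ℂ) = (AC ^ k) i j := by rw [← hmap k]; rfl
      calc ‖(A ^ k) i j‖ = ‖((A ^ k) i j : ℂ)‖ := (Complex.norm_real _).symm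
        _ = ‖(AC ^ k) i j‖ := by rw [this]
        _ ≤ ‖AC ^ k‖ := entry_norm_le _ i j
    intro i j
    set B := (1 - A)⁻¹ with hBdef
    have key : ∀ k, (A ^ k * B) i j ≤ B i j := by
      intro k
      have hid := schur_geom_identity hU k
      rw [← hBdef] at hid
      have : B i j = (∑ m ∈ Finset.range k, A ^ m) i j + (A ^ k * B) i j := by
        conv_lhs => rw [hid]
        simp [Matrix.add_apply]
      rw [this]
      have : 0 ≤ (∑ m ∈ Finset.range k, A ^ m) i j := by
        rw [Matrix.sum_apply]
        exact Finset.sum_nonneg fun m _ => schur_pow_entry_nonneg hA m i j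
      linarith
    have htendAB : Tendsto (fun k => (A ^ k * B) i j) atTop (𝓝 0) := by
      have : ∀ k, (A ^ k * B) i j = ∑ l, (A ^ k) i l * B l j := fun k => Matrix.mul_apply
      simp_rw [this]
      have : Tendsto (fun k => ∑ l, (A ^ k) i l * B l j) atTop (𝓝 (∑ l : Fin n, 0 * B l j)) :=
        tendsto_finset_sum _ fun l _ => (hent i l).mul_const _
      simpa using this
    exact le_of_tendsto htendAB (Eventually.of_forall key)
  · -- backward direction
    rintro ⟨hU, hB⟩ z hz
    set B := (1 - A)⁻¹ with hBdef
    -- entrywise partial sums are bounded by B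
    have hbound : ∀ i j k, ∑ m ∈ Finset.range k, (A ^ m) i j ≤ B i j := by
      intro i j k
      have hid := schur_geom_identity hU k
      rw [← hBdef] at hid
      have hBij : B i j = (∑ m ∈ Finset.range k, A ^ m) i j + (A ^ k * B) i j := by
        conv_lhs => rw [hid]
        simp [Matrix.add_apply]
      have hnn : 0 ≤ (A ^ k * B) i j := by
        rw [Matrix.mul_apply]
        exact Finset.sum_nonneg fun l _ =>
          mul_nonneg (schur_pow_entry_nonneg hA k i l) (hB l j)
      rw [Matrix.sum_apply] at hBij
      linarith [hBij]
    have hent : ∀ i j, Tendsto (fun m => (A ^ m) i j) atTop (𝓝 0) := by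
      intro i j
      exact (summable_of_sum_range_le (fun m => schur_pow_entry_nonneg hA m i j)
        (fun k => hbound i j k)).tendsto_atTop_zero
    -- eigenvector
    have hEig : Module.End.HasEigenvalue (Matrix.toLinAlgEquiv' AC) z := by
      rw [Module.End.hasEigenvalue_iff_mem_spectrum, AlgEquiv.spectrum_eq]
      exact hz
    obtain ⟨v, hv⟩ := hEig.exists_hasEigenvector
    obtain ⟨j0, hj0⟩ : ∃ j, v j ≠ 0 := by
      by_contra hc
      push_neg at hc
      exact hv.right (funext hc)
    have hmv : ∀ m : ℕ, AC ^ m *ᵥ v = z ^ m • v := by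
      intro m
      induction m with
      | zero => simp
      | succ m ih =>
        have hAv : AC *ᵥ v = z • v := by
          have := hv.apply_eq_smul
          rwa [Matrix.toLinAlgEquiv'_apply] at this
        rw [pow_succ, ← Matrix.mulVec_mulVec, hAv, Matrix.mulVec_smul, ih, smul_smul,
          ← pow_succ']
    -- entrywise limit of AC^m *ᵥ v at j0
    have hlim : Tendsto (fun m => (AC ^ m *ᵥ v) j0) atTop (𝓝 0) := by
      have heq : ∀ m, (AC ^ m *ᵥ v) j0 = ∑ l, ((A ^ m) j0 l : ℂ) * v l := by
        intro m
        rw [Matrix.mulVec]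
        simp only [dotProduct]
        congr 1
        ext l
        congr 1
        rw [← hmap m]
        rfl
      simp_rw [heq]
      have : Tendsto (fun m => ∑ l, ((A ^ m) j0 l : ℂ) * v l) atTop
          (𝓝 (∑ l : Fin n, ((0 : ℝ) : ℂ) * v l)) := by
        refine tendsto_finset_sum _ fun l _ => Tendsto.mul_const _ ?_
        exact (Complex.continuous_ofReal.tendsto 0).comp (hent j0 l)
      simpa using this
    have hzm : Tendsto (fun m => z ^ m) atTop (𝓝 0) := by
      have h1 : Tendsto (fun m => z ^ m * v j0) atTop (𝓝 0) := by
        have : ∀ m, (AC ^ m *ᵥ v) j0 = z ^ m * v j0 := by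
          intro m; rw [hmv m]; simp [Pi.smul_apply]
        simpa [this] using hlim
      have := h1.mul_const (v j0)⁻¹
      simpa [mul_assoc, mul_inv_cancel₀ hj0] using this
    have : Tendsto (fun m => ‖z‖ ^ m) atTop (𝓝 0) := by
      have := hzm.norm
      simpa [norm_pow] using this
    have := tendsto_pow_atTop_nhds_zero_iff.mp this
    calc ‖z‖ = |‖z‖| := (abs_of_nonneg (norm_nonneg z)).symm
      _ < 1 := this
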